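/- Let (X_n) be a reversible nearest-neighbour random walk in periodic environment on Z^d with p_x(e) > 0 for all x and all unit vectors e, with potential u and average negative gradient g ≠ 0. Assume g is appropriate: g has rational coordinates and g_1 := αg ∈ M for some α > 0. Write x ≈ y iff x ∼ y and u(x) = u(y). Let L_0 ⊂ Z^d be any set such that (i) L_0 is a union of ≈-equivalence classes, (ii) sup{ dist(x, H_0) : x ∈ L_0 } < ∞ where H_0 = { v ∈ R^d : ⟨v, g⟩ = 0 }, and (iii) every nearest-neighbour path in Z^d from a point v with ⟨v,g⟩ > sup_{x∈L_0}⟨x,g⟩ to a point w with ⟨w,g⟩ < inf_{x∈L_0}⟨x,g⟩ contains a point of L_0. Set L_k := L_0 + k g_1 for k ∈ Z and τ_k := min{ n ≥ 0 : X_n ∈ L_k }. Then there exists a positive integer k, with L_{−k}, L_0, L_k pairwise disjoint, such that for every x_0 ∈ L_0, P( τ_{−k} < τ_k | X_0 = x_0 ) < 1/2. -/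

import Mathlib

open MeasureTheory Filter Topology ProbabilityTheory

noncomputable section

/-- The torus `T = ℤ^d / (M₁ℤ × ⋯ × M_dℤ)`. -/
abbrev Torus (d : ℕ) (Md : Fin d → ℕ) : Type := ∀ i : Fin d, ZMod (Md i)

/-- Projection of `ℤ^d` onto the torus, `x ↦ x mod M`. -/
def projT {d : ℕ} (Md : Fin d → ℕ) (x : Fin d → ℤ) : Torus d Md :=
  fun i => (x i : ZMod (Md i))

/-- A canonical representative in `ℤ^d` of a point of the torus. -/
def repT {d : ℕ} (Md : Fin d → ℕ) [∀ i, NeZero (Md i)] (t : Torus d Md) : Fin d → ℤ :=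
  fun i => ((t i).val : ℤ)

/-- `p` is a periodic environment on `ℤ^d`: each `p x` is a probability distribution
on `ℤ^d` (the jump distribution at `x`), and `x ↦ p x` is `M`-periodic. -/
def IsPeriodicEnv {d : ℕ} (Md : Fin d → ℕ) (p : (Fin d → ℤ) → (Fin d → ℤ) → ℝ) : Prop :=
  (∀ x y, 0 ≤ p x y) ∧ (∀ x, HasSum (p x) 1) ∧
    ∀ (x y : Fin d → ℤ) (i : Fin d), p (x + Pi.single i (Md i : ℤ)) y = p x y

/-- The transition matrix of the induced Markov chain on the torus:
`P a b = ∑_{z : ℤ^d, a + z ∼ b} p_a(z)` (the jump `z` leads from the class `a`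
to the class `b` iff `a + (z mod M) = b`). -/
def indMatrix {d : ℕ} (Md : Fin d → ℕ) [∀ i, NeZero (Md i)]
    (p : (Fin d → ℤ) → (Fin d → ℤ) → ℝ) : Matrix (Torus d Md) (Torus d Md) ℝ :=
  Matrix.of fun a b => ∑' z : Fin d → ℤ, if a + projT Md z = b then p (repT Md a) z else 0

/-- Irreducibility of a finite-state transition matrix: every state can be reached
from every state with positive probability in finitely many (positively many) steps. -/
def MatIrreducible {T : Type*} [Fintype T] [DecidableEq T] (P : Matrix T T ℝ) : Prop :=
  ∀ a b : T, ∃ n : ℕ, 0 < n ∧ 0 < (P ^ n) a b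

/-- Aperiodicity of a finite-state transition matrix: for every state, the gcd of
the possible return times is `1`. -/
def MatAperiodic {T : Type*} [Fintype T] [DecidableEq T] (P : Matrix T T ℝ) : Prop :=
  ∀ a : T, ∀ m : ℕ, (∀ n : ℕ, 0 < n → 0 < (P ^ n) a a → m ∣ n) → m = 1

/-- `π` is a stationary probability distribution for the transition matrix `P`. -/
def IsStationaryDist {T : Type*} [Fintype T] (P : Matrix T T ℝ) (π : T → ℝ) : Prop :=
  (∀ a, 0 ≤ π a) ∧ (∑ a, π a = 1) ∧ ∀ b, ∑ a, π a * P a b = π b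

/-- The drift vector `ν = ∑_{x ∈ T} π(x) ∑_{y ∈ ℤ^d} p_x(y) y`. -/
def driftVec {d : ℕ} (Md : Fin d → ℕ) [∀ i, NeZero (Md i)]
    (p : (Fin d → ℤ) → (Fin d → ℤ) → ℝ) (π : Torus d Md → ℝ) : Fin d → ℝ :=
  fun i => ∑ a : Torus d Md, π a * ∑' y : Fin d → ℤ, p (repT Md a) y * (y i : ℝ)

/-- `μ` is the law of the random walk in the environment `p` started at `x₀`,
as a probability measure on trajectory space: the probability of every cylinder set
is the corresponding product of one-step transition probabilities. -/
def IsRWPELaw {d : ℕ} (p : (Fin d → ℤ) → (Fin d → ℤ) → ℝ) (x₀ : Fin d → ℤ)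
    (μ : Measure (ℕ → (Fin d → ℤ))) : Prop :=
  IsProbabilityMeasure μ ∧
    ∀ (n : ℕ) (x : ℕ → (Fin d → ℤ)),
      μ {ω | ∀ i ≤ n, ω i = x i} =
        ENNReal.ofReal ((if x 0 = x₀ then (1 : ℝ) else 0) *
          ∏ i ∈ Finset.range n, p (x i) (x (i + 1) - x i))

/-- `e` is one of the `2d` unit vectors of `ℤ^d`. -/
def IsUnitVec {d : ℕ} (e : Fin d → ℤ) : Prop :=
  ∃ i : Fin d, e = Pi.single i 1 ∨ e = -Pi.single i 1

/-- The environment is nearest neighbour: only jumps to nearest neighbours have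
positive probability. -/
def IsNearestNeighbour {d : ℕ} (p : (Fin d → ℤ) → (Fin d → ℤ) → ℝ) : Prop :=
  ∀ x y, p x y ≠ 0 → IsUnitVec y

/-- The average negative gradient `g` of the potential,
`g_i = (1/M_i) ∑_{j=0}^{M_i - 1} log (p_{j eᵢ}(eᵢ) / p_{(j+1) eᵢ}(-eᵢ))`. -/
def avgNegGrad {d : ℕ} (Md : Fin d → ℕ) (p : (Fin d → ℤ) → (Fin d → ℤ) → ℝ) :
    Fin d → ℝ :=
  fun i => (Md i : ℝ)⁻¹ * ∑ j ∈ Finset.range (Md i),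
    Real.log (p (Pi.single i (j : ℤ)) (Pi.single i 1) /
      p (Pi.single i ((j : ℤ) + 1)) (-Pi.single i 1))

/-- The conditional expected jump `μ_{xy}` of the walk, given that the induced chain
jumps from `x` to `y`. -/
def condJump {d : ℕ} (Md : Fin d → ℕ) [∀ i, NeZero (Md i)]
    (p : (Fin d → ℤ) → (Fin d → ℤ) → ℝ) (a b : Torus d Md) : Fin d → ℝ :=
  if indMatrix Md p a b = 0 then 0
  else fun i =>
    (∑' z : Fin d → ℤ, if a + projT Md z = b then p (repT Md a) z * (z i : ℝ) else 0) /
      indMatrix Md p a b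

/-- The level hyperplane `L_k = L₀ + k g₁`. -/
def levelSet {d : ℕ} (L0 : Set (Fin d → ℤ)) (g1 : Fin d → ℤ) (k : ℤ) :
    Set (Fin d → ℤ) :=
  (fun y => y + k • g1) '' L0

/-- The first hitting time `τ_L = min {n ≥ 0 : Xₙ ∈ L}` of a set `L ⊆ ℤ^d`
(`⊤` if the set is never hit). -/
def hitTime {d : ℕ} (L : Set (Fin d → ℤ)) (ω : ℕ → (Fin d → ℤ)) : ℕ∞ :=
  sInf {m : ℕ∞ | ∃ n : ℕ, m = (n : ℕ∞) ∧ ω n ∈ L}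

section Chunk1
variable {d : ℕ}

/-- The `2d` unit step vectors, indexed by `Fin d × Bool`. -/
def stepVec (s : Fin d × Bool) : Fin d → ℤ :=
  if s.2 then Pi.single s.1 1 else -Pi.single s.1 1

lemma stepVec_isUnit (s : Fin d × Bool) : IsUnitVec (stepVec s) := by
  refine ⟨s.1, ?_⟩
  unfold stepVec; cases s.2 <;> simp

lemma isUnitVec_iff_stepVec {e : Fin d → ℤ} : IsUnitVec e ↔ ∃ s, e = stepVec s := by
  constructor
  · rintro ⟨i, h | h⟩
    · exact ⟨(i, true), by simpa [stepVec] using h⟩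
    · exact ⟨(i, false), by simpa [stepVec] using h⟩
  · rintro ⟨s, rfl⟩; exact stepVec_isUnit s

lemma stepVec_injective : Function.Injective (stepVec (d := d)) := by
  rintro ⟨i, bi⟩ ⟨j, bj⟩ h
  unfold stepVec at h
  cases bi <;> cases bj <;> simp only [if_true, if_false] at h
  · have := congrFun h i
    have hij : i = j := by
      by_contra hne
      have := congrFun h j
      simp [Pi.single_apply, hne, Ne.symm hne] at this
    subst hij; rfl
  · have := congrFun h i
    simp [Pi.single_apply] at this
    omega
  · have := congrFun h i
    simp [Pi.single_apply] at this
    omega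
  · have hij : i = j := by
      by_contra hne
      have := congrFun h j
      simp [Pi.single_apply, hne, Ne.symm hne] at this
    subst hij; rfl

lemma stepVec_neg (s : Fin d × Bool) : stepVec (s.1, !s.2) = -stepVec s := by
  unfold stepVec; cases s.2 <;> simp

/-- A function invariant under adding `Pi.single i (w i)` is invariant under adding
any vector whose coordinates are divisible by the `w i`. -/
lemma invar_translate {β : Type*} (f : (Fin d → ℤ) → β) (w : Fin d → ℤ)
    (hf : ∀ x i, f (x + Pi.single i (w i)) = f x) :
    ∀ (m : Fin d → ℤ), (∀ i, w i ∣ m i) → ∀ x, f (x + m) = f x := by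
  have hsmul : ∀ (c : ℤ) (i : Fin d) (x), f (x + c • Pi.single i (w i)) = f x := by
    intro c i
    induction c using Int.induction_on with
    | zero => simp
    | succ n ih =>
      intro x
      have : x + ((n : ℤ) + 1) • Pi.single i (w i)
          = (x + (n : ℤ) • Pi.single i (w i)) + Pi.single i (w i) := by
        rw [add_smul, one_smul, add_assoc]
      rw [this, hf, ih]
    | pred n ih =>
      intro x
      have h2 : (x + (-(n : ℤ) - 1) • Pi.single i (w i)) + Pi.single i (w i)
          = x + (-(n : ℤ)) • Pi.single i (w i) := by
        rw [sub_smul, one_smul, add_assoc]; ring_nf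
      have := hf (x + (-(n : ℤ) - 1) • Pi.single i (w i)) i
      rw [h2] at this
      rw [← this, ih]
  intro m hm
  have hrepr : ∀ (s : Finset (Fin d)) (x), f (x + ∑ i ∈ s, Pi.single i (m i)) = f x := by
    intro s
    induction s using Finset.induction_on with
    | empty => simp
    | insert a s hna ih =>
      intro x
      rw [Finset.sum_insert hna]
      obtain ⟨c, hc⟩ := hm a
      have hsingle : Pi.single a (m a) = c • (Pi.single a (w a) : Fin d → ℤ) := by
        rw [hc, mul_comm]
        ext j
        by_cases hj : j = a <;> simp [Pi.single_apply, hj, mul_comm]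
      calc f (x + (Pi.single a (m a) + ∑ i ∈ s, Pi.single i (m i)))
          = f ((x + Pi.single a (m a)) + ∑ i ∈ s, Pi.single i (m i)) := by ring_nf
        _ = f (x + Pi.single a (m a)) := ih _
        _ = f x := by rw [hsingle, hsmul]
  intro x
  have : m = ∑ i, Pi.single i (m i) := by
    ext j; rw [Finset.sum_apply]; simp [Pi.single_apply]
  rw [this] at *
  exact hrepr Finset.univ x

end Chunk1
section Chunk2
variable {d : ℕ} {Md : Fin d → ℕ} [∀ i, NeZero (Md i)]
variable {p : (Fin d → ℤ) → (Fin d → ℤ) → ℝ}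

lemma p_per (henv : IsPeriodicEnv Md p) (m : Fin d → ℤ) (hm : ∀ i, (Md i : ℤ) ∣ m i)
    (x y : Fin d → ℤ) : p (x + m) y = p x y := by
  exact invar_translate (fun z => p z y) (fun i => (Md i : ℤ))
    (fun z i => henv.2.2 z y i) m hm x

lemma repT_sub_dvd (x : Fin d → ℤ) (i : Fin d) :
    (Md i : ℤ) ∣ (repT Md (projT Md x) i - x i) := by
  rw [← ZMod.intCast_zmod_eq_zero_iff_dvd]
  push_cast
  rw [sub_eq_zero]
  show (((((x i : ZMod (Md i))).val : ℤ)) : ZMod (Md i)) = (x i : ZMod (Md i))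
  push_cast
  rw [ZMod.natCast_val, ZMod.cast_id]

lemma p_rep (henv : IsPeriodicEnv Md p) (x y : Fin d → ℤ) :
    p (repT Md (projT Md x)) y = p x y := by
  have : repT Md (projT Md x) = x + (repT Md (projT Md x) - x) := by ring
  rw [this, p_per henv _ (fun i => by simpa using repT_sub_dvd x i)]

lemma sum_p_step (henv : IsPeriodicEnv Md p) (hnn : IsNearestNeighbour p)
    (x : Fin d → ℤ) : ∑ s : Fin d × Bool, p x (stepVec s) = 1 := by
  have hsupp : ∀ y ∉ Finset.image stepVec Finset.univ, p x y = 0 := by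
    intro y hy
    by_contra h
    obtain ⟨s, rfl⟩ := isUnitVec_iff_stepVec.mp (hnn x y h)
    exact hy (Finset.mem_image_of_mem _ (Finset.mem_univ s))
  have h1 : HasSum (p x) (∑ y ∈ Finset.image stepVec Finset.univ, p x y) :=
    hasSum_sum_of_ne_finset_zero hsupp
  have h2 := (henv.2.1 x).unique h1
  calc ∑ s : Fin d × Bool, p x (stepVec s)
      = ∑ y ∈ Finset.image stepVec Finset.univ, p x y :=
        (Finset.sum_image (fun a _ b _ h => stepVec_injective h)).symm
    _ = 1 := h2.symm

variable {u : (Fin d → ℤ) → ℝ}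

lemma u_shift (henv : IsPeriodicEnv Md p)
    (hu : ∀ x e, IsUnitVec e → u x - u (x + e) = Real.log (p x e / p (x + e) (-e)))
    (m : Fin d → ℤ) (hm : ∀ i, (Md i : ℤ) ∣ m i) (x : Fin d → ℤ) :
    u x - u (x + m) = u 0 - u m := by
  have key : ∀ z (j : Fin d), (fun z => u z - u (z + m)) (z + Pi.single j (1:ℤ))
      = (fun z => u z - u (z + m)) z := by
    intro z j
    have hunit : IsUnitVec (Pi.single j (1:ℤ)) := ⟨j, Or.inl rfl⟩
    have h1 := hu z _ hunit
    have h2 := hu (z + m) _ hunit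
    have hp1 : p (z + m) (Pi.single j (1:ℤ)) = p z (Pi.single j (1:ℤ)) :=
      p_per henv m hm z _
    have hp2 : p (z + m + Pi.single j (1:ℤ)) (-(Pi.single j (1:ℤ)))
        = p (z + Pi.single j (1:ℤ)) (-(Pi.single j (1:ℤ))) := by
      have : z + m + Pi.single j (1:ℤ) = (z + Pi.single j (1:ℤ)) + m := by ring
      rw [this, p_per henv m hm]
    rw [hp1, hp2, ← h1] at h2
    simp only
    have : z + Pi.single j (1:ℤ) + m = z + m + Pi.single j (1:ℤ) := by ring
    rw [this]
    linarith
  have := invar_translate (fun z => u z - u (z + m)) (fun _ => (1:ℤ))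
    (fun z i => key z i) x (fun i => one_dvd _) 0
  simpa using this

lemma u_telescope
    (hu : ∀ x e, IsUnitVec e → u x - u (x + e) = Real.log (p x e / p (x + e) (-e)))
    (hu0 : u 0 = 0) (i : Fin d) :
    u (Pi.single i ((Md i : ℤ))) = -((Md i : ℝ) * avgNegGrad Md p i) := by
  have tel : ∀ n : ℕ, u (Pi.single i ((n : ℤ)))
      = -∑ j ∈ Finset.range n,
          Real.log (p (Pi.single i (j : ℤ)) (Pi.single i 1) /
            p (Pi.single i ((j : ℤ) + 1)) (-Pi.single i 1)) := by
    intro n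
    induction n with
    | zero => simpa using hu0
    | succ n ih =>
      have hunit : IsUnitVec (Pi.single i (1:ℤ)) := ⟨i, Or.inl rfl⟩
      have h := hu (Pi.single i ((n : ℤ))) _ hunit
      rw [← Pi.single_add] at h
      rw [Finset.sum_range_succ]
      push_cast
      push_cast at h ih
      linarith
  rw [tel (Md i)]
  rw [avgNegGrad]
  rw [← mul_assoc, mul_inv_cancel₀ (by exact_mod_cast (NeZero.ne (Md i))), one_mul]

/-- The periodic part of the potential. -/
def wfun (Md : Fin d → ℕ) (p : (Fin d → ℤ) → (Fin d → ℤ) → ℝ)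
    (u : (Fin d → ℤ) → ℝ) (x : Fin d → ℤ) : ℝ :=
  u x + ∑ i, avgNegGrad Md p i * (x i : ℝ)

lemma wfun_per (henv : IsPeriodicEnv Md p)
    (hu : ∀ x e, IsUnitVec e → u x - u (x + e) = Real.log (p x e / p (x + e) (-e)))
    (hu0 : u 0 = 0) (m : Fin d → ℤ) (hm : ∀ i, (Md i : ℤ) ∣ m i) (x : Fin d → ℤ) :
    wfun Md p u (x + m) = wfun Md p u x := by
  apply invar_translate (wfun Md p u) (fun i => (Md i : ℤ)) ?_ m hm x
  intro z j
  unfold wfun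
  have h1 : u (z + Pi.single j ((Md j : ℤ))) = u z - (Md j : ℝ) * avgNegGrad Md p j := by
    have := u_shift henv hu (Pi.single j ((Md j : ℤ)))
      (fun i => by by_cases h : i = j <;> simp [Pi.single_apply, h]) z
    rw [u_telescope hu hu0 j] at this
    linarith [this, hu0]
  rw [h1]
  set y : Fin d → ℤ := z + Pi.single j ((Md j : ℤ)) with hy
  have hyi : ∀ i, y i = z i + if i = j then (Md j : ℤ) else 0 := by
    intro i; rw [hy]; simp [Pi.single_apply]
  have h2 : ∑ i, avgNegGrad Md p i * (y i : ℝ)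
      = (∑ i, avgNegGrad Md p i * (z i : ℝ)) + (Md j : ℝ) * avgNegGrad Md p j := by
    have hpt : ∀ i, avgNegGrad Md p i * (y i : ℝ)
        = avgNegGrad Md p i * (z i : ℝ)
          + (if i = j then (Md j : ℝ) * avgNegGrad Md p j else 0) := by
      intro i
      rw [hyi i]
      by_cases h : i = j
      · subst h; simp; push_cast; ring
      · simp [h]
    rw [Finset.sum_congr rfl (fun i _ => hpt i), Finset.sum_add_distrib,
      Finset.sum_ite_eq' Finset.univ j]
    simp
  rw [h2]; ring

end Chunk2
section Stationary
variable {T : Type*} [Fintype T] [DecidableEq T] [Nonempty T]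

lemma exists_stationary_dist (P : Matrix T T ℝ) (hP0 : ∀ a b, 0 ≤ P a b)
    (hP1 : ∀ a, ∑ b, P a b = 1) :
    ∃ π : T → ℝ, (∀ a, 0 ≤ π a) ∧ (∑ a, π a = 1) ∧ ∀ b, ∑ a, π a * P a b = π b := by
  classical
  set act : (T → ℝ) → (T → ℝ) := fun w b => ∑ a, w a * P a b with hact
  set S : Set (T → ℝ) := {w | (∀ a, 0 ≤ w a) ∧ ∑ a, w a = 1} with hS
  have hS_act : ∀ w ∈ S, act w ∈ S := by
    intro w hw
    refine ⟨fun b => Finset.sum_nonneg fun a _ => mul_nonneg (hw.1 a) (hP0 a b), ?_⟩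
    show ∑ b, ∑ a, w a * P a b = 1
    rw [Finset.sum_comm]
    simp_rw [← Finset.mul_sum, hP1, mul_one]
    exact hw.2
  set v0 : T → ℝ := fun _ => (Fintype.card T : ℝ)⁻¹ with hv0def
  have hcard : (0:ℝ) < (Fintype.card T : ℝ) := by
    exact_mod_cast Fintype.card_pos
  have hv0 : v0 ∈ S := by
    refine ⟨fun a => by positivity, ?_⟩
    show ∑ _a : T, (Fintype.card T : ℝ)⁻¹ = 1
    rw [Finset.sum_const, Finset.card_univ, nsmul_eq_mul, mul_inv_cancel₀ (ne_of_gt hcard)]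
  set vn : ℕ → T → ℝ := fun n => act^[n] v0 with hvndef
  have hvn_succ : ∀ n, vn (n + 1) = act (vn n) := by
    intro n; show act^[n+1] v0 = act (act^[n] v0); rw [Function.iterate_succ_apply']
  have hvn : ∀ n, vn n ∈ S := by
    intro n
    induction n with
    | zero => exact hv0
    | succ n ih => rw [hvn_succ]; exact hS_act _ ih
  have hvn01 : ∀ n b, 0 ≤ vn n b ∧ vn n b ≤ 1 := by
    intro n b
    refine ⟨(hvn n).1 b, ?_⟩
    calc vn n b ≤ ∑ a, vn n a :=
          Finset.single_le_sum (fun a _ => (hvn n).1 a) (Finset.mem_univ b)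
      _ = 1 := (hvn n).2
  set ces : ℕ → T → ℝ := fun n b => ((n:ℝ)+1)⁻¹ * ∑ j ∈ Finset.range (n+1), vn j b
    with hcesdef
  have hces : ∀ n, ces n ∈ S := by
    intro n
    have hn1 : (0:ℝ) < (n:ℝ)+1 := by positivity
    constructor
    · intro b
      exact mul_nonneg (by positivity)
        (Finset.sum_nonneg fun j _ => (hvn j).1 b)
    · show ∑ b, ((n:ℝ)+1)⁻¹ * ∑ j ∈ Finset.range (n+1), vn j b = 1
      rw [← Finset.mul_sum, Finset.sum_comm]
      have : ∀ j ∈ Finset.range (n+1), ∑ b, vn j b = 1 := fun j _ => (hvn j).2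
      rw [Finset.sum_congr rfl this, Finset.sum_const, Finset.card_range, nsmul_eq_mul,
        mul_one]
      push_cast
      rw [inv_mul_cancel₀ (ne_of_gt hn1)]
  have hSc : IsCompact S := by
    have hclosed : IsClosed S := by
      have : S = (⋂ a, {w : T → ℝ | 0 ≤ w a}) ∩ {w | ∑ a, w a = 1} := by
        ext w; simp [hS, Set.mem_iInter]
      rw [this]
      exact (isClosed_iInter fun a =>
        isClosed_le continuous_const (continuous_apply a)).inter
        (isClosed_eq (by continuity) continuous_const)
    have hbdd : Bornology.IsBounded S := by
      apply Bornology.IsBounded.subset (Metric.isBounded_closedBall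
        (x := (0 : T → ℝ)) (r := 1))
      intro w hw
      simp only [Metric.mem_closedBall, dist_zero_right]
      rw [pi_norm_le_iff_of_nonneg zero_le_one]
      intro a
      rw [Real.norm_eq_abs, abs_of_nonneg (hw.1 a)]
      calc w a ≤ ∑ b, w b := Finset.single_le_sum (fun b _ => hw.1 b) (Finset.mem_univ a)
        _ = 1 := hw.2
    exact Metric.isCompact_of_isClosed_isBounded hclosed hbdd
  obtain ⟨π, hπS, φ, hφmono, hφtend⟩ := hSc.tendsto_subseq hces
  refine ⟨π, hπS.1, hπS.2, ?_⟩
  intro b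
  have key : ∀ n, act (ces n) b = ces n b + ((n:ℝ)+1)⁻¹ * (vn (n+1) b - vn 0 b) := by
    intro n
    show ∑ a, ces n a * P a b = _
    have e1 : ∀ a, ces n a * P a b
        = ((n:ℝ)+1)⁻¹ * ∑ j ∈ Finset.range (n+1), vn j a * P a b := by
      intro a
      simp only [hcesdef]
      rw [mul_assoc, Finset.sum_mul]
    have l1 : ∑ a, ces n a * P a b
        = ((n:ℝ)+1)⁻¹ * ∑ j ∈ Finset.range (n+1), vn (j+1) b := by
      rw [Finset.sum_congr rfl fun a _ => e1 a, ← Finset.mul_sum, Finset.sum_comm]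
      congr 1
      refine Finset.sum_congr rfl fun j _ => ?_
      show ∑ a, vn j a * P a b = vn (j+1) b
      rw [hvn_succ j]
    have l2 : ∑ j ∈ Finset.range (n+1), vn (j+1) b
        = (∑ j ∈ Finset.range (n+1), vn j b) + vn (n+1) b - vn 0 b := by
      have h' := Finset.sum_range_succ' (fun j => vn j b) (n+1)
      have h'' := Finset.sum_range_succ (fun j => vn j b) (n+1)
      linarith
    rw [l1, l2]
    simp only [hcesdef]
    ring
  have hφge : ∀ m, m ≤ φ m := fun m => hφmono.le_apply
  have hbound : Filter.Tendsto (fun m : ℕ => ((m:ℝ)+1)⁻¹ * 2) atTop (𝓝 0) := by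
    have h0 := tendsto_one_div_add_atTop_nhds_zero_nat (𝕜 := ℝ)
    have := h0.mul_const (2:ℝ)
    simpa [one_div] using this
  have herr : Filter.Tendsto
      (fun m => ((φ m : ℝ)+1)⁻¹ * (vn (φ m + 1) b - vn 0 b)) atTop (𝓝 0) := by
    refine squeeze_zero_norm (fun m => ?_) hbound
    have ha := hvn01 (φ m + 1) b
    have hb := hvn01 0 b
    have h1 : |vn (φ m + 1) b - vn 0 b| ≤ 2 := abs_le.mpr ⟨by linarith, by linarith⟩
    have hpos : (0:ℝ) < (φ m : ℝ) + 1 := by positivity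
    have h2 : ((φ m : ℝ)+1)⁻¹ ≤ ((m:ℝ)+1)⁻¹ := by
      have : (m:ℝ) ≤ (φ m : ℝ) := by exact_mod_cast hφge m
      apply inv_anti₀ (by positivity) (by linarith)
    rw [Real.norm_eq_abs, abs_mul, abs_of_nonneg (le_of_lt (inv_pos.mpr hpos))]
    exact mul_le_mul h2 h1 (abs_nonneg _) (by positivity)
  have hcesb : Filter.Tendsto (fun m => ces (φ m) b) atTop (𝓝 (π b)) :=
    ((continuous_apply b).tendsto π).comp hφtend
  have h1 : Filter.Tendsto (fun m => act (ces (φ m)) b) atTop (𝓝 (π b)) := by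
    have heq : (fun m => act (ces (φ m)) b)
        = fun m => ces (φ m) b + ((φ m : ℝ)+1)⁻¹ * (vn (φ m + 1) b - vn 0 b) := by
      funext m; exact key (φ m)
    rw [heq]
    simpa using hcesb.add herr
  have hcont : Continuous fun w : T → ℝ => act w b :=
    continuous_finset_sum _ fun a _ => (continuous_apply a).mul continuous_const
  have h2 : Filter.Tendsto (fun m => act (ces (φ m)) b) atTop (𝓝 (act π b)) :=
    (hcont.tendsto π).comp hφtend
  exact tendsto_nhds_unique h2 h1

end Stationary
section Chunk4
variable {d : ℕ} {Md : Fin d → ℕ} [∀ i, NeZero (Md i)]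
variable {p : (Fin d → ℤ) → (Fin d → ℤ) → ℝ}

lemma projT_add (x y : Fin d → ℤ) : projT Md (x + y) = projT Md x + projT Md y := by
  funext i; simp [projT]

lemma projT_sub (x y : Fin d → ℤ) : projT Md (x - y) = projT Md x - projT Md y := by
  funext i; simp [projT]

lemma indMatrix_eq_sum (hnn : IsNearestNeighbour p) (a b : Torus d Md) :
    indMatrix Md p a b = ∑ s : Fin d × Bool,
      (if a + projT Md (stepVec s) = b then p (repT Md a) (stepVec s) else 0) := by
  show (∑' z : Fin d → ℤ, if a + projT Md z = b then p (repT Md a) z else 0) = _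
  have hsupp : ∀ z ∉ Finset.image stepVec Finset.univ,
      (if a + projT Md z = b then p (repT Md a) z else 0) = 0 := by
    intro z hz
    have hz0 : p (repT Md a) z = 0 := by
      by_contra h
      obtain ⟨s, rfl⟩ := isUnitVec_iff_stepVec.mp (hnn _ z h)
      exact hz (Finset.mem_image_of_mem _ (Finset.mem_univ s))
    rw [hz0]; split <;> rfl
  rw [tsum_eq_sum hsupp, Finset.sum_image (fun x _ y _ h => stepVec_injective h)]

lemma indMatrix_nonneg (henv : IsPeriodicEnv Md p) (a b : Torus d Md) :
    0 ≤ indMatrix Md p a b := by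
  apply tsum_nonneg
  intro z
  split
  · exact henv.1 _ _
  · exact le_rfl

lemma indMatrix_rowsum (henv : IsPeriodicEnv Md p) (hnn : IsNearestNeighbour p)
    (a : Torus d Md) : ∑ b, indMatrix Md p a b = 1 := by
  rw [Finset.sum_congr rfl fun b _ => indMatrix_eq_sum hnn a b, Finset.sum_comm]
  have hs : ∀ s : Fin d × Bool, ∑ b, (if a + projT Md (stepVec s) = b
      then p (repT Md a) (stepVec s) else 0) = p (repT Md a) (stepVec s) := by
    intro s; simp
  trans (∑ s : Fin d × Bool, p (repT Md a) (stepVec s))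
  · exact Finset.sum_congr rfl fun s _ => hs s
  · exact sum_p_step henv hnn _

lemma indMatrix_step_pos (henv : IsPeriodicEnv Md p) (hnn : IsNearestNeighbour p)
    (hpos : ∀ x e, IsUnitVec e → 0 < p x e) (a : Torus d Md) (s : Fin d × Bool) :
    0 < indMatrix Md p a (a + projT Md (stepVec s)) := by
  rw [indMatrix_eq_sum hnn]
  have hterm : ∀ s' : Fin d × Bool, 0 ≤ (if a + projT Md (stepVec s')
      = a + projT Md (stepVec s) then p (repT Md a) (stepVec s') else 0) := by
    intro s'; split
    · exact henv.1 _ _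
    · exact le_rfl
  calc (0:ℝ) < p (repT Md a) (stepVec s) := hpos _ _ (stepVec_isUnit s)
    _ = (if a + projT Md (stepVec s) = a + projT Md (stepVec s)
          then p (repT Md a) (stepVec s) else 0) := by rw [if_pos rfl]
    _ ≤ _ := Finset.single_le_sum (fun s' _ => hterm s') (Finset.mem_univ s)

lemma indMatrix_pow_nonneg (henv : IsPeriodicEnv Md p)
    (n : ℕ) (a b : Torus d Md) : 0 ≤ (indMatrix Md p ^ n) a b := by
  induction n generalizing a b with
  | zero =>
    rw [pow_zero]
    by_cases h : a = b <;> simp [Matrix.one_apply, h]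
  | succ n ih =>
    rw [pow_succ, Matrix.mul_apply]
    exact Finset.sum_nonneg fun c _ => mul_nonneg (ih a c) (indMatrix_nonneg henv c b)

lemma indMatrix_reach (henv : IsPeriodicEnv Md p) (hnn : IsNearestNeighbour p)
    (hpos : ∀ x e, IsUnitVec e → 0 < p x e) :
    ∀ (N : ℕ) (z : Fin d → ℕ), (∑ i, z i = N) → ∀ a : Torus d Md,
      0 < (indMatrix Md p ^ N) a (a + projT Md (fun i => (z i : ℤ))) := by
  intro N
  induction N with
  | zero =>
    intro z hz a
    have hz0 : ∀ i, z i = 0 := by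
      intro i
      exact (Finset.sum_eq_zero_iff.mp hz) i (Finset.mem_univ i)
    have : projT Md (fun i => (z i : ℤ)) = 0 := by
      funext i; simp [projT, hz0 i]
    rw [this, add_zero, pow_zero, Matrix.one_apply_eq]
    norm_num
  | succ N ih =>
    intro z hz a
    have hex : ∃ i, z i ≠ 0 := by
      by_contra h
      push_neg at h
      simp [h] at hz
    obtain ⟨i, hi⟩ := hex
    set z' := Function.update z i (z i - 1) with hz'
    have hzi : 1 ≤ z i := Nat.one_le_iff_ne_zero.mpr hi
    have hsum' : ∑ j, z' j = N := by
      rw [hz', Finset.sum_update_of_mem (Finset.mem_univ i),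
        Finset.sdiff_singleton_eq_erase]
      have := Finset.add_sum_erase Finset.univ z (Finset.mem_univ i)
      omega
    have hdecomp : (fun j => (z j : ℤ)) = (fun j => (z' j : ℤ)) + Pi.single i 1 := by
      funext j
      by_cases h : j = i
      · subst h; simp [hz', Pi.single_apply]; omega
      · simp [hz', Pi.single_apply, h, Function.update_of_ne h]
    have hstep := indMatrix_step_pos henv hnn hpos
      (a + projT Md (fun j => (z' j : ℤ))) (i, true)
    have hvec : stepVec ((i, true) : Fin d × Bool) = Pi.single i 1 := by
      simp [stepVec]
    rw [hvec] at hstep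
    have htarget : a + projT Md (fun j => (z j : ℤ))
        = (a + projT Md (fun j => (z' j : ℤ))) + projT Md (Pi.single i 1) := by
      rw [hdecomp, projT_add]; ring
    rw [htarget, pow_succ, Matrix.mul_apply]
    have hterm : ∀ c, 0 ≤ (indMatrix Md p ^ N) a c *
        indMatrix Md p c ((a + projT Md (fun j => (z' j : ℤ))) + projT Md (Pi.single i 1)) :=
      fun c => mul_nonneg (indMatrix_pow_nonneg henv N a c) (indMatrix_nonneg henv c _)
    calc (0:ℝ) < (indMatrix Md p ^ N) a (a + projT Md (fun j => (z' j : ℤ))) *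
          indMatrix Md p (a + projT Md (fun j => (z' j : ℤ)))
            ((a + projT Md (fun j => (z' j : ℤ))) + projT Md (Pi.single i 1)) :=
        mul_pos (ih z' hsum' a) hstep
      _ ≤ _ := Finset.single_le_sum (fun c _ => hterm c) (Finset.mem_univ _)

end Chunk4
section Chunk5
variable {d : ℕ} {Md : Fin d → ℕ} [∀ i, NeZero (Md i)]
variable {p : (Fin d → ℤ) → (Fin d → ℤ) → ℝ}

lemma stat_iter {π : Torus d Md → ℝ}
    (hstat : ∀ b, ∑ a, π a * indMatrix Md p a b = π b) :
    ∀ (n : ℕ) (b : Torus d Md), ∑ a, π a * (indMatrix Md p ^ n) a b = π b := by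
  intro n
  induction n with
  | zero =>
    intro b
    simp only [pow_zero]
    rw [Finset.sum_eq_single b]
    · rw [Matrix.one_apply_eq, mul_one]
    · intro a _ hne; rw [Matrix.one_apply_ne hne, mul_zero]
    · intro h; exact absurd (Finset.mem_univ _) h
  | succ n ih =>
    intro b
    have : ∀ a, π a * (indMatrix Md p ^ (n+1)) a b
        = ∑ c, (π a * (indMatrix Md p ^ n) a c) * indMatrix Md p c b := by
      intro a
      rw [pow_succ, Matrix.mul_apply, Finset.mul_sum]
      exact Finset.sum_congr rfl fun c _ => by ring
    rw [Finset.sum_congr rfl fun a _ => this a, Finset.sum_comm]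
    have : ∀ c, ∑ a, (π a * (indMatrix Md p ^ n) a c) * indMatrix Md p c b
        = π c * indMatrix Md p c b := by
      intro c
      rw [← Finset.sum_mul, ih c]
    rw [Finset.sum_congr rfl fun c _ => this c]
    exact hstat b

lemma pi_pos (henv : IsPeriodicEnv Md p) (hnn : IsNearestNeighbour p)
    (hpos : ∀ x e, IsUnitVec e → 0 < p x e) {π : Torus d Md → ℝ}
    (hnn0 : ∀ a, 0 ≤ π a) (hsum : ∑ a, π a = 1)
    (hstat : ∀ b, ∑ a, π a * indMatrix Md p a b = π b) :
    ∀ b, 0 < π b := by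
  have hex : ∃ a, 0 < π a := by
    by_contra h
    push_neg at h
    have : ∀ a ∈ Finset.univ, π a = 0 := fun a _ => le_antisymm (h a) (hnn0 a)
    rw [Finset.sum_congr rfl this] at hsum
    simp at hsum
  obtain ⟨a, ha⟩ := hex
  intro b
  set z : Fin d → ℕ := fun i => (b i - a i).val with hz
  have hab : a + projT Md (fun i => (z i : ℤ)) = b := by
    funext i
    show a i + (((b i - a i).val : ℤ) : ZMod (Md i)) = b i
    push_cast
    rw [ZMod.natCast_val, ZMod.cast_id]
    ring
  set N := ∑ i, z i with hN
  have hreach := indMatrix_reach henv hnn hpos N z rfl a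
  rw [hab] at hreach
  have := stat_iter hstat N b
  calc (0:ℝ) < π a * (indMatrix Md p ^ N) a b := mul_pos ha hreach
    _ ≤ ∑ c, π c * (indMatrix Md p ^ N) c b :=
      Finset.single_le_sum
        (fun c _ => mul_nonneg (hnn0 c) (indMatrix_pow_nonneg henv N c b))
        (Finset.mem_univ a)
    _ = π b := this

lemma star_identity (henv : IsPeriodicEnv Md p) (hnn : IsNearestNeighbour p)
    {π : Torus d Md → ℝ}
    (hstat : ∀ b, ∑ a, π a * indMatrix Md p a b = π b) (b : Torus d Md) :
    ∑ s : Fin d × Bool, π (b - projT Md (stepVec s)) *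
      p (repT Md (b - projT Md (stepVec s))) (stepVec s) = π b := by
  calc ∑ s : Fin d × Bool, π (b - projT Md (stepVec s)) *
        p (repT Md (b - projT Md (stepVec s))) (stepVec s)
      = ∑ s : Fin d × Bool, ∑ a : Torus d Md,
          (if a + projT Md (stepVec s) = b then π a * p (repT Md a) (stepVec s) else 0) := by
        refine Finset.sum_congr rfl fun s _ => ?_
        rw [Finset.sum_eq_single (b - projT Md (stepVec s))]
        · rw [if_pos (by rw [sub_add_cancel])]
        · intro a _ hne
          rw [if_neg]
          intro hc
          apply hne
          rw [← hc]; ring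
        · intro h; exact absurd (Finset.mem_univ _) h
    _ = ∑ a : Torus d Md, ∑ s : Fin d × Bool,
          (if a + projT Md (stepVec s) = b then π a * p (repT Md a) (stepVec s) else 0) :=
        Finset.sum_comm
    _ = ∑ a, π a * indMatrix Md p a b := by
        refine Finset.sum_congr rfl fun a _ => ?_
        rw [indMatrix_eq_sum hnn, Finset.mul_sum]
        refine Finset.sum_congr rfl fun s _ => ?_
        rw [mul_ite, mul_zero]
    _ = π b := hstat b

lemma F_harmonic (henv : IsPeriodicEnv Md p) (hnn : IsNearestNeighbour p)
    (hpos : ∀ x e, IsUnitVec e → 0 < p x e)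
    {u : (Fin d → ℤ) → ℝ}
    (hu : ∀ x e, IsUnitVec e → u x - u (x + e) = Real.log (p x e / p (x + e) (-e)))
    {π : Torus d Md → ℝ}
    (hstat : ∀ b, ∑ a, π a * indMatrix Md p a b = π b) (x : Fin d → ℤ) :
    ∑ s : Fin d × Bool, p x (stepVec s) *
      (Real.exp (u (x + stepVec s)) * π (projT Md (x + stepVec s)))
      = Real.exp (u x) * π (projT Md x) := by
  have rev : ∀ s : Fin d × Bool, p x (stepVec s) * Real.exp (u (x + stepVec s))
      = Real.exp (u x) * p (x + stepVec s) (-(stepVec s)) := by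
    intro s
    have hunit := stepVec_isUnit s
    have hunitneg : IsUnitVec (-(stepVec s)) := by
      rw [← stepVec_neg]; exact stepVec_isUnit _
    have hp1 : 0 < p x (stepVec s) := hpos _ _ hunit
    have hp2 : 0 < p (x + stepVec s) (-(stepVec s)) := hpos _ _ hunitneg
    have h := hu x (stepVec s) hunit
    have h2 : Real.exp (u x) / Real.exp (u (x + stepVec s))
        = p x (stepVec s) / p (x + stepVec s) (-(stepVec s)) := by
      rw [← Real.exp_sub, h, Real.exp_log (div_pos hp1 hp2)]
    have h3 := (div_eq_div_iff (Real.exp_ne_zero _) (ne_of_gt hp2)).mp h2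
    linarith [h3]
  calc ∑ s : Fin d × Bool, p x (stepVec s) *
        (Real.exp (u (x + stepVec s)) * π (projT Md (x + stepVec s)))
      = Real.exp (u x) * ∑ s : Fin d × Bool,
          p (x + stepVec s) (-(stepVec s)) * π (projT Md (x + stepVec s)) := by
        rw [Finset.mul_sum]
        refine Finset.sum_congr rfl fun s _ => ?_
        rw [← mul_assoc, rev s]
        ring
    _ = Real.exp (u x) * ∑ s : Fin d × Bool,
          π (projT Md x - projT Md (stepVec s)) *
            p (repT Md (projT Md x - projT Md (stepVec s))) (stepVec s) := by
        congr 1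
        have hinv : Function.Involutive (fun s : Fin d × Bool => (s.1, !s.2)) := by
          intro s; simp
        apply Fintype.sum_bijective _ hinv.bijective
        intro s
        show p (x + stepVec s) (-(stepVec s)) * π (projT Md (x + stepVec s))
            = π (projT Md x - projT Md (stepVec (s.1, !s.2))) *
              p (repT Md (projT Md x - projT Md (stepVec (s.1, !s.2)))) (stepVec (s.1, !s.2))
        rw [stepVec_neg s, ← projT_sub, sub_neg_eq_add, p_rep henv]
        ring
    _ = Real.exp (u x) * π (projT Md x) := by
        rw [star_identity henv hnn hstat (projT Md x)]

end Chunk5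
section Chunk6
variable {d : ℕ}

open Classical in
/-- weight of first hitting `A` at time exactly `n`, avoiding `A` before. -/
noncomputable def hitR (p : (Fin d → ℤ) → (Fin d → ℤ) → ℝ) (A : Set (Fin d → ℤ)) :
    ℕ → (Fin d → ℤ) → ℝ
  | 0, x => if x ∈ A then 1 else 0
  | (n+1), x => if x ∈ A then 0
      else ∑ s : Fin d × Bool, p x (stepVec s) * hitR p A n (x + stepVec s)

lemma hitR_nonneg {p : (Fin d → ℤ) → (Fin d → ℤ) → ℝ} {A : Set (Fin d → ℤ)}
    (hp : ∀ x y, 0 ≤ p x y) : ∀ n x, 0 ≤ hitR p A n x := by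
  intro n
  induction n with
  | zero =>
    intro x
    rw [hitR]
    split <;> norm_num
  | succ n ih =>
    intro x
    rw [hitR]
    split
    · exact le_rfl
    · exact Finset.sum_nonneg fun s _ => mul_nonneg (hp _ _) (ih _)

lemma hitR_sum_le {p : (Fin d → ℤ) → (Fin d → ℤ) → ℝ} {A : Set (Fin d → ℤ)}
    (hp0 : ∀ x y, 0 ≤ p x y) (F : (Fin d → ℤ) → ℝ) (hFpos : ∀ x, 0 < F x)
    (hharm : ∀ x, ∑ s : Fin d × Bool, p x (stepVec s) * F (x + stepVec s) = F x)
    (mA : ℝ) (hmA : ∀ y ∈ A, mA ≤ F y) :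
    ∀ (N : ℕ) (x : Fin d → ℤ),
      mA * ∑ n ∈ Finset.range (N+1), hitR p A n x ≤ F x := by
  intro N
  induction N with
  | zero =>
    intro x
    rw [Finset.sum_range_one, hitR]
    split
    · rename_i hx
      rw [mul_one]; exact hmA _ hx
    · rw [mul_zero]; exact le_of_lt (hFpos x)
  | succ N ih =>
    intro x
    rw [Finset.sum_range_succ' (fun n => hitR p A n x) (N+1)]
    by_cases hx : x ∈ A
    · have h0 : hitR p A 0 x = 1 := by rw [hitR, if_pos hx]
      have hz : ∀ n ∈ Finset.range (N+1), hitR p A (n+1) x = 0 := by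
        intro n _; rw [hitR, if_pos hx]
      rw [Finset.sum_congr rfl hz, Finset.sum_const_zero, h0, zero_add, mul_one]
      exact hmA _ hx
    · have h0 : hitR p A 0 x = 0 := by rw [hitR, if_neg hx]
      have hz : ∀ n ∈ Finset.range (N+1), hitR p A (n+1) x
          = ∑ s : Fin d × Bool, p x (stepVec s) * hitR p A n (x + stepVec s) := by
        intro n _; rw [hitR, if_neg hx]
      rw [Finset.sum_congr rfl hz, h0, add_zero, Finset.sum_comm]
      have hswap : mA * ∑ s : Fin d × Bool, ∑ n ∈ Finset.range (N+1),
          p x (stepVec s) * hitR p A n (x + stepVec s)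
          = ∑ s : Fin d × Bool,
              p x (stepVec s) * (mA * ∑ n ∈ Finset.range (N+1), hitR p A n (x + stepVec s)) := by
        simp only [Finset.mul_sum]
        refine Finset.sum_congr rfl fun s _ => ?_
        refine Finset.sum_congr rfl fun n _ => by ring
      rw [hswap]
      calc ∑ s : Fin d × Bool,
            p x (stepVec s) * (mA * ∑ n ∈ Finset.range (N+1), hitR p A n (x + stepVec s))
          ≤ ∑ s : Fin d × Bool, p x (stepVec s) * F (x + stepVec s) :=
            Finset.sum_le_sum fun s _ =>
              mul_le_mul_of_nonneg_left (ih (x + stepVec s)) (hp0 _ _)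
        _ = F x := hharm x

/-- Position along a step-path. -/
def pathPos (x : Fin d → ℤ) {n : ℕ} (σ : Fin n → Fin d × Bool) (j : ℕ) : Fin d → ℤ :=
  x + ∑ l : Fin n, (if (l : ℕ) < j then stepVec (σ l) else 0)

/-- Weight of a step-path. -/
def pathWt (p : (Fin d → ℤ) → (Fin d → ℤ) → ℝ) (x : Fin d → ℤ) {n : ℕ}
    (σ : Fin n → Fin d × Bool) : ℝ :=
  ∏ l : Fin n, p (pathPos x σ l) (stepVec (σ l))

/-- The path first hits `A` at time exactly `n`. -/
def goodPath (A : Set (Fin d → ℤ)) (x : Fin d → ℤ) {n : ℕ}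
    (σ : Fin n → Fin d × Bool) : Prop :=
  pathPos x σ n ∈ A ∧ ∀ j < n, pathPos x σ j ∉ A

lemma pathPos_zero (x : Fin d → ℤ) {n : ℕ} (σ : Fin n → Fin d × Bool) :
    pathPos x σ 0 = x := by
  unfold pathPos
  rw [Finset.sum_eq_zero (fun l _ => by simp), add_zero]

lemma pathPos_cons (x : Fin d → ℤ) {n : ℕ} (s : Fin d × Bool)
    (σ : Fin n → Fin d × Bool) (j : ℕ) :
    pathPos x (Fin.cons s σ) (j+1) = pathPos (x + stepVec s) σ j := by
  unfold pathPos
  rw [Fin.sum_univ_succ]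
  simp only [Fin.cons_zero, Fin.cons_succ, Fin.val_zero, Fin.val_succ]
  rw [if_pos (Nat.succ_pos j)]
  have hrest : ∀ l : Fin n, (if (l : ℕ) + 1 < j + 1 then stepVec (σ l) else 0)
      = (if (l : ℕ) < j then stepVec (σ l) else 0) := by
    intro l
    by_cases h : (l : ℕ) < j
    · rw [if_pos (Nat.succ_lt_succ h), if_pos h]
    · rw [if_neg (fun hc => h (Nat.succ_lt_succ_iff.mp hc)), if_neg h]
  rw [Finset.sum_congr rfl fun l _ => hrest l]
  abel

lemma pathWt_cons (p : (Fin d → ℤ) → (Fin d → ℤ) → ℝ) (x : Fin d → ℤ) {n : ℕ}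
    (s : Fin d × Bool) (σ : Fin n → Fin d × Bool) :
    pathWt p x (Fin.cons s σ) = p x (stepVec s) * pathWt p (x + stepVec s) σ := by
  unfold pathWt
  rw [Fin.prod_univ_succ]
  simp only [Fin.cons_zero, Fin.cons_succ, Fin.val_zero, Fin.val_succ]
  rw [pathPos_zero]
  congr 1
  refine Finset.prod_congr rfl fun l _ => ?_
  rw [pathPos_cons]

lemma goodPath_cons (A : Set (Fin d → ℤ)) (x : Fin d → ℤ) {n : ℕ}
    (s : Fin d × Bool) (σ : Fin n → Fin d × Bool) :
    goodPath A x (Fin.cons s σ) ↔ (x ∉ A ∧ goodPath A (x + stepVec s) σ) := by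
  unfold goodPath
  constructor
  · rintro ⟨hend, havoid⟩
    refine ⟨by simpa [pathPos_zero] using havoid 0 (Nat.succ_pos n), ?_, ?_⟩
    · rw [← pathPos_cons]; exact hend
    · intro j hj
      rw [← pathPos_cons]
      exact havoid (j+1) (Nat.succ_lt_succ hj)
  · rintro ⟨hx, hend, havoid⟩
    refine ⟨by rw [pathPos_cons]; exact hend, ?_⟩
    intro j hj
    match j with
    | 0 => rw [pathPos_zero]; exact hx
    | (j+1) =>
      rw [pathPos_cons]
      exact havoid j (Nat.succ_lt_succ_iff.mp hj)

open Classical in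
lemma goodPath_sum_le {p : (Fin d → ℤ) → (Fin d → ℤ) → ℝ} (hp0 : ∀ x y, 0 ≤ p x y)
    (A : Set (Fin d → ℤ)) :
    ∀ (n : ℕ) (x : Fin d → ℤ),
      ∑ σ : Fin n → Fin d × Bool, (if goodPath A x σ then pathWt p x σ else 0)
        ≤ hitR p A n x := by
  intro n
  induction n with
  | zero =>
    intro x
    rw [Fintype.sum_unique, hitR]
    have hgp : goodPath A x (default : Fin 0 → Fin d × Bool) ↔ x ∈ A := by
      unfold goodPath
      rw [pathPos_zero]
      simp
    have hwt : pathWt p x (default : Fin 0 → Fin d × Bool) = 1 := by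
      unfold pathWt; simp
    by_cases hx : x ∈ A
    · rw [if_pos (hgp.mpr hx), if_pos hx, hwt]
    · rw [if_neg (fun h => hx (hgp.mp h)), if_neg hx]
  | succ n ih =>
    intro x
    have hsum : ∑ σ : Fin (n+1) → Fin d × Bool,
        (if goodPath A x σ then pathWt p x σ else 0)
        = ∑ q : (Fin d × Bool) × (Fin n → Fin d × Bool),
            (if goodPath A x (Fin.cons q.1 q.2) then pathWt p x (Fin.cons q.1 q.2)
              else 0) := by
      refine (Fintype.sum_equiv (Fin.consEquiv fun _ => Fin d × Bool)
        _ _ fun q => ?_).symm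
      have : (Fin.consEquiv fun _ : Fin (n+1) => Fin d × Bool) q
          = Fin.cons q.1 q.2 := rfl
      rw [this]
    rw [hsum, Fintype.sum_prod_type, hitR]
    by_cases hx : x ∈ A
    · rw [if_pos hx]
      apply le_of_eq
      apply Finset.sum_eq_zero
      intro s _
      apply Finset.sum_eq_zero
      intro σ' _
      rw [if_neg]
      rw [goodPath_cons]
      tauto
    · rw [if_neg hx]
      have hinner : ∀ s : Fin d × Bool,
          ∑ σ' : Fin n → Fin d × Bool,
            (if goodPath A x (Fin.cons s σ') then pathWt p x (Fin.cons s σ') else 0)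
          = p x (stepVec s) * ∑ σ' : Fin n → Fin d × Bool,
              (if goodPath A (x + stepVec s) σ' then pathWt p (x + stepVec s) σ'
                else 0) := by
        intro s
        rw [Finset.mul_sum]
        refine Finset.sum_congr rfl fun σ' _ => ?_
        by_cases hg : goodPath A (x + stepVec s) σ'
        · rw [if_pos (by rw [goodPath_cons]; exact ⟨hx, hg⟩), if_pos hg, pathWt_cons]
        · rw [if_neg (by rw [goodPath_cons]; tauto), if_neg hg, mul_zero]
      rw [Finset.sum_congr rfl fun s _ => hinner s]
      exact Finset.sum_le_sum fun s _ =>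
        mul_le_mul_of_nonneg_left (ih (x + stepVec s)) (hp0 _ _)

end Chunk6
section Chunk7
variable {d : ℕ}

/-- Weight of a function path. -/
noncomputable def fw (p : (Fin d → ℤ) → (Fin d → ℤ) → ℝ) (x₀ : Fin d → ℤ) {n : ℕ}
    (γ : Fin (n+1) → (Fin d → ℤ)) : ℝ :=
  (if γ 0 = x₀ then (1:ℝ) else 0) *
    ∏ l : Fin n, p (γ l.castSucc) (γ l.succ - γ l.castSucc)

lemma fw_nonneg {p : (Fin d → ℤ) → (Fin d → ℤ) → ℝ} (hp0 : ∀ x y, 0 ≤ p x y)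
    (x₀ : Fin d → ℤ) {n : ℕ} (γ : Fin (n+1) → (Fin d → ℤ)) : 0 ≤ fw p x₀ γ := by
  unfold fw
  apply mul_nonneg
  · split <;> norm_num
  · exact Finset.prod_nonneg fun l _ => hp0 _ _

lemma pathPos_succ {n : ℕ} (x : Fin d → ℤ) (σ : Fin n → Fin d × Bool) (j : ℕ)
    (hj : j < n) :
    pathPos x σ (j+1) = pathPos x σ j + stepVec (σ ⟨j, hj⟩) := by
  unfold pathPos
  have hpt : ∀ l : Fin n, (if (l : ℕ) < j + 1 then stepVec (σ l) else 0)
      = (if (l : ℕ) < j then stepVec (σ l) else 0)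
        + (if l = ⟨j, hj⟩ then stepVec (σ l) else 0) := by
    intro l
    by_cases h1 : (l : ℕ) < j
    · rw [if_pos (Nat.lt_succ_of_lt h1), if_pos h1,
        if_neg (fun hc => by subst hc; simp at h1), add_zero]
    · by_cases h2 : l = ⟨j, hj⟩
      · rw [if_pos (by subst h2; simp), if_neg (by subst h2; simp), if_pos h2, zero_add]
      · have : ¬ (l : ℕ) < j + 1 := by
          have : (l : ℕ) ≠ j := fun hc => h2 (Fin.ext hc)
          omega
        rw [if_neg this, if_neg h1, if_neg h2, add_zero]
  rw [Finset.sum_congr rfl fun l _ => hpt l, Finset.sum_add_distrib,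
    Finset.sum_ite_eq' Finset.univ (⟨j, hj⟩ : Fin n), if_pos (Finset.mem_univ _)]
  abel

/-- Function path associated to a step path. -/
def pathFn (x₀ : Fin d → ℤ) {n : ℕ} (σ : Fin n → Fin d × Bool)
    (j : Fin (n+1)) : Fin d → ℤ :=
  pathPos x₀ σ (j : ℕ)

lemma pathFn_zero (x₀ : Fin d → ℤ) {n : ℕ} (σ : Fin n → Fin d × Bool) :
    pathFn x₀ σ 0 = x₀ := pathPos_zero x₀ σ

lemma pathFn_step (x₀ : Fin d → ℤ) {n : ℕ} (σ : Fin n → Fin d × Bool) (l : Fin n) :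
    pathFn x₀ σ l.succ - pathFn x₀ σ l.castSucc = stepVec (σ l) := by
  unfold pathFn
  have h1 : ((l.succ : Fin (n+1)) : ℕ) = (l : ℕ) + 1 := rfl
  have h2 : ((l.castSucc : Fin (n+1)) : ℕ) = (l : ℕ) := rfl
  rw [h1, h2, pathPos_succ x₀ σ (l : ℕ) l.isLt]
  simp

lemma fw_pathFn {p : (Fin d → ℤ) → (Fin d → ℤ) → ℝ} (x₀ : Fin d → ℤ) {n : ℕ}
    (σ : Fin n → Fin d × Bool) : fw p x₀ (pathFn x₀ σ) = pathWt p x₀ σ := by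
  unfold fw pathWt
  rw [if_pos (pathFn_zero x₀ σ), one_mul]
  refine Finset.prod_congr rfl fun l _ => ?_
  rw [pathFn_step]
  rfl

lemma pathFn_injective (x₀ : Fin d → ℤ) {n : ℕ} :
    Function.Injective (pathFn x₀ (n := n)) := by
  intro σ σ' h
  funext l
  apply stepVec_injective
  rw [← pathFn_step x₀ σ l, ← pathFn_step x₀ σ' l, h]

lemma exists_pathFn {p : (Fin d → ℤ) → (Fin d → ℤ) → ℝ} (hnn : IsNearestNeighbour p)
    (x₀ : Fin d → ℤ) {n : ℕ} (γ : Fin (n+1) → (Fin d → ℤ)) (hfw : fw p x₀ γ ≠ 0) :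
    ∃ σ : Fin n → Fin d × Bool, γ = pathFn x₀ σ := by
  unfold fw at hfw
  have h0 : γ 0 = x₀ := by
    by_contra h
    rw [if_neg h, zero_mul] at hfw
    exact hfw rfl
  have hprod : ∀ l : Fin n, p (γ l.castSucc) (γ l.succ - γ l.castSucc) ≠ 0 := by
    intro l
    have := right_ne_zero_of_mul hfw
    exact Finset.prod_ne_zero_iff.mp this l (Finset.mem_univ l)
  have hstep : ∀ l : Fin n, ∃ s : Fin d × Bool,
      γ l.succ - γ l.castSucc = stepVec s := by
    intro l
    exact isUnitVec_iff_stepVec.mp (hnn _ _ (hprod l))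
  choose σ hσ using hstep
  refine ⟨σ, ?_⟩
  have key : ∀ m : ℕ, ∀ hm : m < n + 1, γ ⟨m, hm⟩ = pathPos x₀ σ m := by
    intro m
    induction m with
    | zero => intro hm; rw [pathPos_zero]; exact h0
    | succ m ih =>
      intro hm
      have hmn : m < n := Nat.succ_lt_succ_iff.mp hm
      have hm' : m < n + 1 := Nat.lt_of_lt_of_le hmn (Nat.le_succ n)
      have hl := hσ ⟨m, hmn⟩
      have e1 : (⟨m, hmn⟩ : Fin n).succ = ⟨m+1, hm⟩ := rfl
      have e2 : (⟨m, hmn⟩ : Fin n).castSucc = ⟨m, hm'⟩ := rfl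
      rw [e1, e2] at hl
      rw [pathPos_succ x₀ σ m hmn, ← ih hm']
      have := sub_eq_iff_eq_add.mp hl
      rw [this]; ring
  funext j
  exact key (j : ℕ) j.isLt

open Classical in
lemma fw_sum_le {p : (Fin d → ℤ) → (Fin d → ℤ) → ℝ} (hp0 : ∀ x y, 0 ≤ p x y)
    (hnn : IsNearestNeighbour p) (A : Set (Fin d → ℤ)) (x₀ : Fin d → ℤ) {n : ℕ}
    (G : Finset (Fin (n+1) → (Fin d → ℤ)))
    (hG : ∀ γ ∈ G, γ (Fin.last n) ∈ A ∧ ∀ j : Fin (n+1), (j:ℕ) < n → γ j ∉ A) :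
    ∑ γ ∈ G, fw p x₀ γ ≤ hitR p A n x₀ := by
  classical
  set G' := G.filter (fun γ => fw p x₀ γ ≠ 0) with hG'
  have h1 : ∑ γ ∈ G, fw p x₀ γ = ∑ γ ∈ G', fw p x₀ γ :=
    (Finset.sum_filter_ne_zero G).symm
  set Q := Finset.image (pathFn x₀)
    (Finset.univ.filter (fun σ : Fin n → Fin d × Bool => goodPath A x₀ σ)) with hQ
  have hsub : G' ⊆ Q := by
    intro γ hγ
    rw [hG', Finset.mem_filter] at hγ
    obtain ⟨hγG, hγne⟩ := hγ
    obtain ⟨σ, rfl⟩ := exists_pathFn hnn x₀ γ hγne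
    rw [hQ, Finset.mem_image]
    refine ⟨σ, ?_, rfl⟩
    rw [Finset.mem_filter]
    refine ⟨Finset.mem_univ _, ?_, ?_⟩
    · have := (hG _ hγG).1
      show pathPos x₀ σ n ∈ A
      have : pathFn x₀ σ (Fin.last n) ∈ A := this
      simpa [pathFn, Fin.val_last] using this
    · intro j hj
      have := (hG _ hγG).2 ⟨j, Nat.lt_of_lt_of_le hj (Nat.le_succ n)⟩ hj
      simpa [pathFn] using this
  have h2 : ∑ γ ∈ G', fw p x₀ γ ≤ ∑ γ ∈ Q, fw p x₀ γ :=
    Finset.sum_le_sum_of_subset_of_nonneg hsub fun γ _ _ => fw_nonneg hp0 x₀ γ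
  have h3 : ∑ γ ∈ Q, fw p x₀ γ
      = ∑ σ ∈ Finset.univ.filter (fun σ : Fin n → Fin d × Bool => goodPath A x₀ σ),
          pathWt p x₀ σ := by
    rw [hQ, Finset.sum_image (fun a _ b _ h => pathFn_injective x₀ h)]
    exact Finset.sum_congr rfl fun σ _ => fw_pathFn x₀ σ
  have h4 : ∑ σ ∈ Finset.univ.filter (fun σ : Fin n → Fin d × Bool => goodPath A x₀ σ),
      pathWt p x₀ σ
      = ∑ σ : Fin n → Fin d × Bool, (if goodPath A x₀ σ then pathWt p x₀ σ else 0) :=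
    Finset.sum_filter _ _
  calc ∑ γ ∈ G, fw p x₀ γ = ∑ γ ∈ G', fw p x₀ γ := h1
    _ ≤ ∑ γ ∈ Q, fw p x₀ γ := h2
    _ = _ := h3.trans h4
    _ ≤ hitR p A n x₀ := goodPath_sum_le hp0 A n x₀

end Chunk7
section Chunk8
variable {d : ℕ}

lemma cylinder_measure {p : (Fin d → ℤ) → (Fin d → ℤ) → ℝ} {x₀ : Fin d → ℤ}
    {μ0 : Measure (ℕ → (Fin d → ℤ))} (hμx : IsRWPELaw p x₀ μ0) (n : ℕ)
    (γ : Fin (n+1) → (Fin d → ℤ)) :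
    μ0 {ω : ℕ → (Fin d → ℤ) | ∀ i : Fin (n+1), ω (i:ℕ) = γ i}
      = ENNReal.ofReal (fw p x₀ γ) := by
  set x : ℕ → (Fin d → ℤ) := fun i => γ ⟨min i n, by omega⟩ with hx
  have hxi : ∀ i : Fin (n+1), x (i : ℕ) = γ i := by
    intro i
    have h1 : (⟨(i:ℕ) ⊓ n, by omega⟩ : Fin (n+1)) = i := by
      apply Fin.ext
      simp [Nat.min_eq_left (Nat.lt_succ_iff.mp i.isLt)]
    rw [hx]
    exact congrArg γ h1
  have hset : {ω : ℕ → (Fin d → ℤ) | ∀ i ≤ n, ω i = x i}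
      = {ω : ℕ → (Fin d → ℤ) | ∀ i : Fin (n+1), ω (i:ℕ) = γ i} := by
    ext ω
    constructor
    · intro h i
      rw [h (i : ℕ) (Nat.lt_succ_iff.mp i.isLt), hxi i]
    · intro h i hi
      have := h ⟨i, Nat.lt_succ_of_le hi⟩
      rw [← hxi ⟨i, Nat.lt_succ_of_le hi⟩] at this
      exact this
  have hval := hμx.2 n x
  rw [hset] at hval
  rw [hval]
  congr 1
  unfold fw
  congr 1
  · rw [← Fin.prod_univ_eq_prod_range (fun i => p (x i) (x (i+1) - x i)) n]
    refine Finset.prod_congr rfl fun l _ => ?_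
    have e1 : x (l : ℕ) = γ l.castSucc := hxi l.castSucc
    have e2 : x ((l : ℕ) + 1) = γ l.succ := hxi l.succ
    rw [e1, e2]

lemma cyl_measurable {n : ℕ} (γ : Fin (n+1) → (Fin d → ℤ)) :
    MeasurableSet {ω : ℕ → (Fin d → ℤ) | ∀ i : Fin (n+1), ω (i:ℕ) = γ i} := by
  have : {ω : ℕ → (Fin d → ℤ) | ∀ i : Fin (n+1), ω (i:ℕ) = γ i}
      = ⋂ i : Fin (n+1), (fun ω : ℕ → (Fin d → ℤ) => ω (i:ℕ)) ⁻¹' {γ i} := by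
    ext ω; simp [Set.mem_iInter]
  rw [this]
  exact MeasurableSet.iInter fun i =>
    (measurable_pi_apply (i:ℕ)) (measurableSet_singleton (γ i))

open Classical in
lemma event_measure_bound {p : (Fin d → ℤ) → (Fin d → ℤ) → ℝ}
    (hp0 : ∀ x y, 0 ≤ p x y) (hnn : IsNearestNeighbour p) {x₀ : Fin d → ℤ}
    {μ0 : Measure (ℕ → (Fin d → ℤ))} (hμx : IsRWPELaw p x₀ μ0)
    (A B : Set (Fin d → ℤ)) :
    μ0 {ω | hitTime A ω < hitTime B ω} ≤ ∑' n : ℕ, ENNReal.ofReal (hitR p A n x₀) := by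
  classical
  set En : ℕ → Set (ℕ → (Fin d → ℤ)) :=
    fun n => {ω | ω n ∈ A ∧ ∀ j < n, ω j ∉ A} with hEn
  have hincl : {ω | hitTime A ω < hitTime B ω} ⊆ ⋃ n, En n := by
    intro ω hω
    have hne : hitTime A ω ≠ ⊤ := ne_top_of_lt hω
    have hex : ∃ n : ℕ, ω n ∈ A := by
      by_contra h
      push_neg at h
      have hemp : {m : ℕ∞ | ∃ n : ℕ, m = (n:ℕ∞) ∧ ω n ∈ A} = ∅ := by
        ext m
        simp only [Set.mem_setOf_eq, Set.mem_empty_iff_false, iff_false, not_exists]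
        rintro n ⟨-, hn⟩
        exact h n hn
      have : hitTime A ω = ⊤ := by rw [hitTime, hemp, sInf_empty]
      exact hne this
    exact Set.mem_iUnion.mpr ⟨Nat.find hex,
      Nat.find_spec hex, fun j hj => Nat.find_min hex hj⟩
  have hperN : ∀ n : ℕ, μ0 (En n) ≤ ENNReal.ofReal (hitR p A n x₀) := by
    intro n
    set Gd : (Fin (n+1) → (Fin d → ℤ)) → Prop :=
      fun γ => γ (Fin.last n) ∈ A ∧ ∀ j : Fin (n+1), (j:ℕ) < n → γ j ∉ A with hGd
    have hsub : En n ⊆ ⋃ γ : {γ : Fin (n+1) → (Fin d → ℤ) // Gd γ},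
        {ω : ℕ → (Fin d → ℤ) | ∀ i : Fin (n+1), ω (i:ℕ) = (γ : Fin (n+1) → (Fin d → ℤ)) i} := by
      intro ω hω
      refine Set.mem_iUnion.mpr ⟨⟨fun i => ω (i:ℕ), ?_, ?_⟩, fun i => rfl⟩
      · show ω ((Fin.last n : Fin (n+1)) : ℕ) ∈ A
        rw [Fin.val_last]
        exact hω.1
      · intro j hj
        exact hω.2 (j:ℕ) hj
    calc μ0 (En n)
        ≤ μ0 (⋃ γ : {γ : Fin (n+1) → (Fin d → ℤ) // Gd γ},
            {ω : ℕ → (Fin d → ℤ) | ∀ i : Fin (n+1),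
              ω (i:ℕ) = (γ : Fin (n+1) → (Fin d → ℤ)) i}) := measure_mono hsub
      _ ≤ ∑' γ : {γ : Fin (n+1) → (Fin d → ℤ) // Gd γ},
            μ0 {ω : ℕ → (Fin d → ℤ) | ∀ i : Fin (n+1),
              ω (i:ℕ) = (γ : Fin (n+1) → (Fin d → ℤ)) i} := measure_iUnion_le _
      _ = ∑' γ : {γ : Fin (n+1) → (Fin d → ℤ) // Gd γ},
            ENNReal.ofReal (fw p x₀ (γ : Fin (n+1) → (Fin d → ℤ))) := by
          exact tsum_congr fun γ => cylinder_measure hμx n _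
      _ ≤ ENNReal.ofReal (hitR p A n x₀) := by
          apply Summable.tsum_le_of_sum_le ENNReal.summable
          intro s
          rw [← ENNReal.ofReal_sum_of_nonneg (fun γ _ => fw_nonneg hp0 x₀ _)]
          apply ENNReal.ofReal_le_ofReal
          have himg : ∑ γ ∈ s, fw p x₀ (γ : Fin (n+1) → (Fin d → ℤ))
              = ∑ γ ∈ s.image (Subtype.val), fw p x₀ γ := by
            rw [Finset.sum_image (fun a _ b _ h => Subtype.ext h)]
          rw [himg]
          apply fw_sum_le hp0 hnn A x₀
          intro γ hγ
          obtain ⟨γ', hγ', rfl⟩ := Finset.mem_image.mp hγ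
          exact γ'.2
  calc μ0 {ω | hitTime A ω < hitTime B ω}
      ≤ μ0 (⋃ n, En n) := measure_mono hincl
    _ ≤ ∑' n, μ0 (En n) := measure_iUnion_le En
    _ ≤ ∑' n, ENNReal.ofReal (hitR p A n x₀) := ENNReal.tsum_le_tsum hperN

end Chunk8
section Chunk9
variable {d : ℕ} {Md : Fin d → ℕ} [∀ i, NeZero (Md i)]
variable {p : (Fin d → ℤ) → (Fin d → ℤ) → ℝ}

lemma wfun_bound (henv : IsPeriodicEnv Md p) {u : (Fin d → ℤ) → ℝ}
    (hu : ∀ x e, IsUnitVec e → u x - u (x + e) = Real.log (p x e / p (x + e) (-e)))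
    (hu0 : u 0 = 0) :
    ∃ W : ℝ, 0 ≤ W ∧ ∀ x, |wfun Md p u x| ≤ W := by
  haveI : Nonempty (Torus d Md) := ⟨fun _ => 0⟩
  refine ⟨Finset.univ.sup' Finset.univ_nonempty
    (fun t : Torus d Md => |wfun Md p u (repT Md t)|), ?_, ?_⟩
  · obtain ⟨t0⟩ := (inferInstance : Nonempty (Torus d Md))
    exact le_trans (abs_nonneg (wfun Md p u (repT Md t0)))
      (Finset.le_sup' (fun t : Torus d Md => |wfun Md p u (repT Md t)|) (Finset.mem_univ t0))
  · intro x
    have hper : wfun Md p u (repT Md (projT Md x)) = wfun Md p u x := by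
      have h1 : repT Md (projT Md x) = x + (repT Md (projT Md x) - x) := by ring
      rw [h1, wfun_per henv hu hu0 _ (fun i => by simpa using repT_sub_dvd x i)]
    rw [← hper]
    exact Finset.le_sup' (fun t : Torus d Md => |wfun Md p u (repT Md t)|) (Finset.mem_univ (projT Md x))

lemma tsum_hitR_le {A : Set (Fin d → ℤ)} (hp0 : ∀ x y, 0 ≤ p x y)
    (F : (Fin d → ℤ) → ℝ) (hFpos : ∀ x, 0 < F x)
    (hharm : ∀ x, ∑ s : Fin d × Bool, p x (stepVec s) * F (x + stepVec s) = F x)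
    (mA : ℝ) (hmA0 : 0 < mA) (hmA : ∀ y ∈ A, mA ≤ F y) (x₀ : Fin d → ℤ) :
    ∑' n : ℕ, ENNReal.ofReal (hitR p A n x₀) ≤ ENNReal.ofReal (F x₀ / mA) := by
  apply Summable.tsum_le_of_sum_le ENNReal.summable
  intro s
  rw [← ENNReal.ofReal_sum_of_nonneg (fun n _ => hitR_nonneg hp0 n x₀)]
  apply ENNReal.ofReal_le_ofReal
  set N := s.sup id with hN
  have hsub : s ⊆ Finset.range (N+1) := by
    intro n hn
    exact Finset.mem_range.mpr (Nat.lt_succ_of_le (Finset.le_sup (f := id) hn))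
  calc ∑ n ∈ s, hitR p A n x₀
      ≤ ∑ n ∈ Finset.range (N+1), hitR p A n x₀ :=
        Finset.sum_le_sum_of_subset_of_nonneg hsub
          (fun n _ _ => hitR_nonneg hp0 n x₀)
    _ ≤ F x₀ / mA := by
        rw [le_div_iff₀ hmA0]
        have := hitR_sum_le hp0 F hFpos hharm mA hmA N x₀
        linarith

end Chunk9
/-- **Hitting-time estimate for the level hyperplanes.** Let the environment be a
reversible nearest-neighbour periodic environment with everywhere positive one-step
probabilities, potential `u` and average negative gradient `g ≠ 0`, where `g` is
appropriate: it has rational coordinates and `g₁ := α g` lies in the period lattice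
`M` for some `α > 0`. Let `L₀ ⊆ ℤ^d` be a union of `≈`-equivalence classes (where
`x ≈ y` iff `x ∼ y` and `u(x) = u(y)`) whose points lie at bounded distance from the
hyperplane `H₀ = {⟨·, g⟩ = 0}` and which disconnects `ℤ^d`: every nearest-neighbour
path from the side `{⟨·,g⟩ > sup_{L₀} ⟨·,g⟩}` to the side `{⟨·,g⟩ < inf_{L₀} ⟨·,g⟩}`
meets `L₀`. Set `L_k := L₀ + k g₁` and let `τ_k` be the hitting time of `L_k`. Then
there is a positive integer `k` with `L_{-k}, L₀, L_k` pairwise disjoint such that for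
every starting point `x₀ ∈ L₀` one has `P(τ_{-k} < τ_k ∣ X₀ = x₀) < 1/2`. -/
theorem hitting_time_estimate (d : ℕ) (hd : 0 < d) (Md : Fin d → ℕ)
    [∀ i, NeZero (Md i)]
    (p : (Fin d → ℤ) → (Fin d → ℤ) → ℝ) (henv : IsPeriodicEnv Md p)
    (hnn : IsNearestNeighbour p) (hpos : ∀ x e, IsUnitVec e → 0 < p x e)
    (u : (Fin d → ℤ) → ℝ) (hu0 : u 0 = 0)
    (hu : ∀ x e, IsUnitVec e → u x - u (x + e) = Real.log (p x e / p (x + e) (-e)))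
    (hg : avgNegGrad Md p ≠ 0)
    (hrat : ∀ i, ∃ q : ℚ, avgNegGrad Md p i = (q : ℝ))
    (α : ℝ) (hα : 0 < α) (g1 : Fin d → ℤ)
    (hg1 : ∀ i, (g1 i : ℝ) = α * avgNegGrad Md p i)
    (hg1M : ∀ i, (Md i : ℤ) ∣ g1 i)
    (L0 : Set (Fin d → ℤ))
    (hL0cls : ∀ x ∈ L0, ∀ y : Fin d → ℤ,
      (∀ i, (Md i : ℤ) ∣ x i - y i) → u x = u y → y ∈ L0)
    (hL0bdd : ∃ C : ℝ, ∀ x ∈ L0, |∑ i, avgNegGrad Md p i * (x i : ℝ)| ≤ C)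
    (hL0sep : ∀ (n : ℕ) (x : Fin (n + 1) → (Fin d → ℤ)),
      (∀ i : Fin n, IsUnitVec (x i.succ - x i.castSucc)) →
      sSup ((fun y : Fin d → ℤ => ∑ i, avgNegGrad Md p i * (y i : ℝ)) '' L0) <
        ∑ i, avgNegGrad Md p i * (x 0 i : ℝ) →
      (∑ i, avgNegGrad Md p i * (x (Fin.last n) i : ℝ)) <
        sInf ((fun y : Fin d → ℤ => ∑ i, avgNegGrad Md p i * (y i : ℝ)) '' L0) →
      ∃ i : Fin (n + 1), x i ∈ L0)
    (μ : (Fin d → ℤ) → Measure (ℕ → (Fin d → ℤ)))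
    (hμ : ∀ x₀, IsRWPELaw p x₀ (μ x₀)) :
    ∃ k : ℕ, 0 < k ∧
      Disjoint (levelSet L0 g1 (-(k : ℤ))) L0 ∧
      Disjoint L0 (levelSet L0 g1 (k : ℤ)) ∧
      Disjoint (levelSet L0 g1 (-(k : ℤ))) (levelSet L0 g1 (k : ℤ)) ∧
      ∀ x₀ ∈ L0,
        μ x₀ {ω | hitTime (levelSet L0 g1 (-(k : ℤ))) ω <
          hitTime (levelSet L0 g1 (k : ℤ)) ω} < 1 / 2 := by

  classical
  rcases Set.eq_empty_or_nonempty L0 with hL0e | hL0ne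
  · refine ⟨1, one_pos, ?_, ?_, ?_, ?_⟩
    · simp [levelSet, hL0e]
    · simp [levelSet, hL0e]
    · simp [levelSet, hL0e]
    · intro x₀ hx₀
      rw [hL0e] at hx₀
      exact absurd hx₀ (Set.notMem_empty x₀)
  · haveI : Nonempty (Torus d Md) := ⟨fun _ => 0⟩
    have t0 : Torus d Md := fun _ => 0
    obtain ⟨C, hC⟩ := hL0bdd
    obtain ⟨xbar, hxbar⟩ := hL0ne
    have hC0 : 0 ≤ C := le_trans (abs_nonneg _) (hC xbar hxbar)
    obtain ⟨W, hW0, hWb⟩ := wfun_bound henv hu hu0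
    obtain ⟨π, hπ0, hπ1, hπs⟩ := exists_stationary_dist (indMatrix Md p)
      (indMatrix_nonneg henv) (indMatrix_rowsum henv hnn)
    have hπpos := pi_pos henv hnn hpos hπ0 hπ1 hπs
    set g : Fin d → ℝ := avgNegGrad Md p with hgdef
    set F : (Fin d → ℤ) → ℝ := fun x => Real.exp (u x) * π (projT Md x) with hFdef
    have hFpos : ∀ x, 0 < F x := fun x => mul_pos (Real.exp_pos _) (hπpos _)
    have hharm : ∀ x, ∑ s : Fin d × Bool, p x (stepVec s) * F (x + stepVec s) = F x :=
      fun x => F_harmonic henv hnn hpos hu hπs x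
    set πmin := Finset.univ.inf' Finset.univ_nonempty π with hπmin
    set πmax := Finset.univ.sup' Finset.univ_nonempty π with hπmax
    have hπminpos : 0 < πmin := by
      rw [hπmin, Finset.lt_inf'_iff]
      intro b _
      exact hπpos b
    have hπminle : ∀ t, πmin ≤ π t := by
      intro t; rw [hπmin]; exact Finset.inf'_le _ (Finset.mem_univ t)
    have hπmaxge : ∀ t, π t ≤ πmax := by
      intro t; rw [hπmax]; exact Finset.le_sup' _ (Finset.mem_univ t)
    have hπmaxpos : 0 < πmax := lt_of_lt_of_le (hπpos t0) (hπmaxge t0)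
    set G1 : ℝ := ∑ i, g i * (g1 i : ℝ) with hG1def
    have hG1 : G1 = α * ∑ i, g i ^ 2 := by
      rw [hG1def, Finset.mul_sum]
      refine Finset.sum_congr rfl fun i _ => ?_
      rw [hg1 i]; ring
    have hgsq : 0 < ∑ i, g i ^ 2 := by
      obtain ⟨i₀, hi₀⟩ := Function.ne_iff.mp hg
      exact Finset.sum_pos' (fun i _ => sq_nonneg _)
        ⟨i₀, Finset.mem_univ _, lt_of_le_of_ne (sq_nonneg _) (Ne.symm (pow_ne_zero 2 hi₀))⟩
    have hG1pos : 0 < G1 := by rw [hG1]; exact mul_pos hα hgsq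
    have hip : ∀ (x : Fin d → ℤ) (c : ℤ),
        (∑ i, g i * (((x + c • g1) i : ℤ) : ℝ))
          = (∑ i, g i * (x i : ℝ)) + (c : ℝ) * G1 := by
      intro x c
      have hpt : ∀ i, g i * (((x + c • g1) i : ℤ) : ℝ)
          = g i * (x i : ℝ) + (c : ℝ) * (g i * (g1 i : ℝ)) := by
        intro i
        have h1 : (x + c • g1) i = x i + c * g1 i := by
          simp [Pi.smul_apply, smul_eq_mul]
        rw [h1]
        push_cast
        ring
      rw [Finset.sum_congr rfl fun i _ => hpt i, Finset.sum_add_distrib,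
        ← Finset.mul_sum, hG1def]
    have hud : ∀ x, u x = wfun Md p u x - ∑ i, g i * (x i : ℝ) := by
      intro x
      have h1 : wfun Md p u x = u x + ∑ i, g i * (x i : ℝ) := by
        rw [hgdef]; rfl
      linarith
    set τ := 2*C + 2*W + Real.log 2 + Real.log πmax - Real.log πmin with hτ
    have hτ2C : 2*C < τ := by
      have hlog2 : 0 < Real.log 2 := Real.log_pos (by norm_num)
      have hmm : Real.log πmin ≤ Real.log πmax :=
        Real.log_le_log hπminpos (le_trans (hπminle t0) (hπmaxge t0))
      rw [hτ]
      linarith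
    obtain ⟨k, hk⟩ := exists_nat_gt (τ / G1 ⊔ 0)
    have hkpos : 0 < k := by
      have h0 : (0:ℝ) < (k:ℝ) := lt_of_le_of_lt le_sup_right hk
      exact_mod_cast h0
    have hkG1 : τ < (k:ℝ) * G1 := by
      have h1 : τ / G1 < (k:ℝ) := lt_of_le_of_lt le_sup_left hk
      have h2 := (div_lt_iff₀ hG1pos).mp h1
      linarith
    have hk2C : 2*C < (k:ℝ)*G1 := lt_trans hτ2C hkG1
    have hkG1pos : 0 < (k:ℝ)*G1 :=
      mul_pos (by exact_mod_cast hkpos) hG1pos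
    have hlev : ∀ (c : ℤ) (y : Fin d → ℤ), y ∈ levelSet L0 g1 c →
        |(∑ i, g i * (y i : ℝ)) - (c:ℝ) * G1| ≤ C := by
      intro c y hy
      simp only [levelSet, Set.mem_image] at hy
      obtain ⟨x, hx, hxy⟩ := hy
      subst hxy
      rw [hip x c]
      simpa using hC x hx
    have hdisj : ∀ c c' : ℤ, 2*C < ((c':ℝ) - (c:ℝ)) * G1 →
        Disjoint (levelSet L0 g1 c) (levelSet L0 g1 c') := by
      intro c c' hcc
      rw [Set.disjoint_left]
      intro y hy hy'
      have h1 := abs_le.mp (hlev c y hy)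
      have h2 := abs_le.mp (hlev c' y hy')
      nlinarith [h1.1, h1.2, h2.1, h2.2]
    have hL0eq : levelSet L0 g1 0 = L0 := by
      unfold levelSet
      simp
    refine ⟨k, hkpos, ?_, ?_, ?_, ?_⟩
    · have := hdisj (-(k:ℤ)) 0 (by push_cast; linarith)
      rwa [hL0eq] at this
    · have := hdisj 0 (k:ℤ) (by push_cast; linarith)
      rwa [hL0eq] at this
    · exact hdisj (-(k:ℤ)) (k:ℤ) (by push_cast; linarith)
    · intro x₀ hx₀
      set A := levelSet L0 g1 (-(k:ℤ)) with hA
      set B := levelSet L0 g1 (k:ℤ) with hB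
      set mA := Real.exp ((k:ℝ)*G1 - C - W) * πmin with hmAdef
      have hmA0 : 0 < mA := mul_pos (Real.exp_pos _) hπminpos
      have hmA : ∀ y ∈ A, mA ≤ F y := by
        intro y hy
        have h1 := (abs_le.mp (hlev (-(k:ℤ)) y hy)).2
        push_cast at h1
        have huy : (k:ℝ)*G1 - C - W ≤ u y := by
          have h2 := (abs_le.mp (hWb y)).1
          have h3 := hud y
          linarith
        calc mA = Real.exp ((k:ℝ)*G1 - C - W) * πmin := hmAdef
          _ ≤ Real.exp (u y) * π (projT Md y) :=
            mul_le_mul (Real.exp_le_exp.mpr huy) (hπminle _)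
              (le_of_lt hπminpos) (le_of_lt (Real.exp_pos _))
          _ = F y := rfl
      have hFx₀ : F x₀ ≤ Real.exp (C + W) * πmax := by
        have h1 := (abs_le.mp (hC x₀ hx₀)).1
        have h2 := (abs_le.mp (hWb x₀)).2
        have h3 := hud x₀
        have hux : u x₀ ≤ C + W := by linarith
        calc F x₀ = Real.exp (u x₀) * π (projT Md x₀) := rfl
          _ ≤ Real.exp (C + W) * πmax :=
            mul_le_mul (Real.exp_le_exp.mpr hux) (hπmaxge _)
              (le_of_lt (hπpos _)) (le_of_lt (Real.exp_pos _))
      have hhalf : F x₀ / mA < 1/2 := by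
        rw [div_lt_iff₀ hmA0]
        have hineq : 2 * (Real.exp (C + W) * πmax) < mA := by
          rw [hmAdef]
          have e1 : Real.exp (Real.log 2 + (C+W) + Real.log πmax)
              = 2 * (Real.exp (C+W) * πmax) := by
            rw [Real.exp_add, Real.exp_add, Real.exp_log two_pos,
              Real.exp_log hπmaxpos]
            ring
          have e2 : Real.exp ((k:ℝ)*G1 - C - W + Real.log πmin)
              = Real.exp ((k:ℝ)*G1 - C - W) * πmin := by
            rw [Real.exp_add, Real.exp_log hπminpos]
          rw [← e1, ← e2]
          apply Real.exp_lt_exp.mpr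
          rw [hτ] at hkG1
          linarith
        nlinarith [hFx₀]
      have hb1 := event_measure_bound henv.1 hnn (hμ x₀) A B
      have hb2 := tsum_hitR_le henv.1 F hFpos hharm mA hmA0 hmA x₀
      have hb3 : ENNReal.ofReal (F x₀ / mA) < 1/2 := by
        have hhe : (1/2 : ENNReal) = ENNReal.ofReal (1/2) := by
          rw [ENNReal.ofReal_div_of_pos (by norm_num), ENNReal.ofReal_one,
            ENNReal.ofReal_ofNat]
        rw [hhe]
        exact (ENNReal.ofReal_lt_ofReal_iff (by norm_num)).mpr hhalf
      exact lt_of_le_of_lt (le_trans hb1 hb2) hb3
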